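/- For coprime positive integers a and b with a odd, one has s(a,2b) = s(a,b) + s(a,b;0,1/2), where s(q,p;x,y) = Σ_{μ mod p} (((μ+y)/p))((q(μ+y)/p + x)) is the Dedekind–Rademacher sum. -/

import Mathlib

open Finset Real

open Classical in
/-- The sawtooth function: 0 on integers, fractional part minus 1/2 otherwise. -/
noncomputable def saw (x : ℝ) : ℝ :=
  if ∃ n : ℤ, x = n then 0 else Int.fract x - 1/2

/-- The Dedekind sum s(q,p). -/
noncomputable def dedekindSum (q : ℤ) (p : ℕ) : ℝ :=
  ∑ μ ∈ Finset.range p, saw ((μ : ℝ) / p) * saw ((q : ℝ) * μ / p)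

/-- The Dedekind–Rademacher sum s(q,p;x,y). -/
noncomputable def drSum (q : ℤ) (p : ℕ) (x y : ℝ) : ℝ :=
  ∑ μ ∈ Finset.range p, saw (((μ : ℝ) + y) / p) * saw ((q : ℝ) * ((μ : ℝ) + y) / p + x)

lemma sum_range_even_odd (f : ℕ → ℝ) (b : ℕ) :
    ∑ μ ∈ Finset.range (2 * b), f μ
      = ∑ ν ∈ Finset.range b, f (2 * ν) + ∑ ν ∈ Finset.range b, f (2 * ν + 1) := by
  induction b with
  | zero => simp
  | succ n ih =>
      rw [Nat.mul_succ, Finset.sum_range_succ, Finset.sum_range_succ,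
        Finset.sum_range_succ, Finset.sum_range_succ, ih]
      ring

theorem dedekind_sum_split (a b : ℕ) (ha : 0 < a) (hb : 0 < b)
    (hcop : Nat.Coprime a b) (hodd : Odd a) :
    dedekindSum (a : ℤ) (2 * b) = dedekindSum (a : ℤ) b + drSum (a : ℤ) b 0 (1/2) := by
  unfold dedekindSum drSum
  rw [sum_range_even_odd]
  have hb' : (b : ℝ) ≠ 0 := Nat.cast_ne_zero.mpr hb.ne'
  congr 1
  · apply Finset.sum_congr rfl
    intro ν _
    have h1 : ((2 * ν : ℕ) : ℝ) / ((2 * b : ℕ) : ℝ) = (ν : ℝ) / b := by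
      push_cast; field_simp
    have h2 : ((a : ℤ) : ℝ) * ((2 * ν : ℕ) : ℝ) / ((2 * b : ℕ) : ℝ)
        = ((a : ℤ) : ℝ) * ν / b := by
      push_cast; field_simp
    rw [h1, h2]
  · apply Finset.sum_congr rfl
    intro ν _
    have h1 : ((2 * ν + 1 : ℕ) : ℝ) / ((2 * b : ℕ) : ℝ) = ((ν : ℝ) + 1/2) / b := by
      push_cast; field_simp
    have h2 : ((a : ℤ) : ℝ) * ((2 * ν + 1 : ℕ) : ℝ) / ((2 * b : ℕ) : ℝ)
        = ((a : ℤ) : ℝ) * ((ν : ℝ) + 1/2) / b + 0 := by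
      push_cast; field_simp
      ring_nf
    rw [h1, h2]
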